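/- arXiv:1702.08321 — 2 statements merged into one kernel-verified Lean document; each statement's English description precedes it below -/
import Mathlib

section
/- For all positive integers q, n, ∏_{k=1}^{∞} (F_{4n(2k+q-1)} + F_{4nq})/(F_{4n(2k+q-1)} - F_{4nq}) = (1/(√5)^q) · ∏_{k=1}^{q} L_{2n(2k-1)}/F_{2n(2k-1)}. -/
open Real Filter Finset

def lucas : ℕ → ℕ
  | 0 => 2
  | 1 => 1
  | n + 2 => lucas n + lucas (n + 1)

lemma lucas_real : ∀ m : ℕ, (lucas m : ℝ) = goldenRatio ^ m + goldenConj ^ m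
  | 0 => by norm_num [lucas]
  | 1 => by norm_num [lucas, goldenRatio_add_goldenConj]
  | (m + 2) => by
    have h1 := lucas_real m
    have h2 := lucas_real (m + 1)
    have e : (lucas (m + 2) : ℝ) = (lucas m : ℝ) + (lucas (m + 1) : ℝ) := by
      rw [lucas]; push_cast; ring
    have h25 : Real.sqrt 5 ^ 2 = 5 := Real.sq_sqrt (by norm_num)
    rw [e, h1, h2]
    linear_combination goldenRatio ^ m * goldenRatio_sq + goldenConj ^ m * goldenConj_sq
      - ((goldenRatio ^ m + goldenConj ^ m) / 2) * h25

lemma lucas_pos : ∀ m : ℕ, 0 < lucas m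
  | 0 => by norm_num [lucas]
  | 1 => by norm_num [lucas]
  | (m + 2) => by rw [lucas]; exact Nat.add_pos_left (lucas_pos m) _

lemma gold_conj_sq_pow (v : ℕ) : goldenRatio ^ (2 * v) * goldenConj ^ (2 * v) = 1 := by
  rw [← mul_pow, pow_mul, goldenRatio_mul_goldenConj]; norm_num

lemma sqrt5_pos : (0:ℝ) < Real.sqrt 5 := Real.sqrt_pos.2 (by norm_num)

lemma fib_add_fib (u v : ℕ) :
    (Nat.fib (u + 4 * v) : ℝ) + (Nat.fib u : ℝ) =
      (Nat.fib (u + 2 * v) : ℝ) * (lucas (2 * v) : ℝ) := by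
  have h5 : Real.sqrt 5 ≠ 0 := ne_of_gt sqrt5_pos
  have key := gold_conj_sq_pow v
  rw [Real.coe_fib_eq, Real.coe_fib_eq, Real.coe_fib_eq, lucas_real,
    show u + 4 * v = u + 2 * v + 2 * v by ring, pow_add, pow_add, pow_add, pow_add]
  have h5' : Real.sqrt 5 ≠ 0 := h5
  linear_combination (-(goldenRatio ^ u - goldenConj ^ u) / Real.sqrt 5) * key

lemma fib_sub_fib (u v : ℕ) :
    (Nat.fib (u + 4 * v) : ℝ) - (Nat.fib u : ℝ) =
      (lucas (u + 2 * v) : ℝ) * (Nat.fib (2 * v) : ℝ) := by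
  have h5 : Real.sqrt 5 ≠ 0 := ne_of_gt sqrt5_pos
  have key := gold_conj_sq_pow v
  rw [Real.coe_fib_eq, Real.coe_fib_eq, Real.coe_fib_eq, lucas_real,
    show u + 4 * v = u + 2 * v + 2 * v by ring, pow_add, pow_add, pow_add, pow_add]
  linear_combination ((goldenRatio ^ u - goldenConj ^ u) / Real.sqrt 5) * key

/-- L_{2α} F_{2α+w} - F_{2α} L_{2α+w} = 2 F_w -/
lemma lucas_fib_sub (α w : ℕ) :
    (lucas (2 * α) : ℝ) * (Nat.fib (2 * α + w) : ℝ)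
      - (Nat.fib (2 * α) : ℝ) * (lucas (2 * α + w) : ℝ) = 2 * (Nat.fib w : ℝ) := by
  have h5 : Real.sqrt 5 ≠ 0 := ne_of_gt sqrt5_pos
  have key := gold_conj_sq_pow α
  rw [Real.coe_fib_eq, Real.coe_fib_eq, Real.coe_fib_eq, lucas_real, lucas_real,
    pow_add, pow_add]
  linear_combination (2 * (goldenRatio ^ w - goldenConj ^ w) / Real.sqrt 5) * key

/-- L_a - √5 F_a = 2 ψ^a -/
lemma lucas_sub_sqrt5_fib (a : ℕ) :
    (lucas a : ℝ) - Real.sqrt 5 * (Nat.fib a : ℝ) = 2 * goldenConj ^ a := by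
  have h5 : Real.sqrt 5 ≠ 0 := ne_of_gt sqrt5_pos
  rw [Real.coe_fib_eq, lucas_real, mul_comm, div_mul_cancel₀ _ h5]
  ring

noncomputable def gg (n k : ℕ) : ℝ :=
  (lucas (2 * n * (2 * k + 1)) : ℝ) / (Nat.fib (2 * n * (2 * k + 1)) : ℝ)

section gglemmas
variable {n : ℕ} (hn : 0 < n)

lemma idx_pos (k : ℕ) (hn : 0 < n) : 0 < 2 * n * (2 * k + 1) := by positivity

lemma fib_idx_pos (k : ℕ) (hn : 0 < n) : (0:ℝ) < (Nat.fib (2 * n * (2 * k + 1)) : ℝ) := by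
  exact_mod_cast Nat.fib_pos.2 (idx_pos k hn)

lemma lucas_cast_pos (m : ℕ) : (0:ℝ) < (lucas m : ℝ) := by exact_mod_cast lucas_pos m

lemma gg_pos (k : ℕ) (hn : 0 < n) : 0 < gg n k :=
  div_pos (lucas_cast_pos _) (fib_idx_pos k hn)

lemma gg_sub_sqrt5 (k : ℕ) (hn : 0 < n) :
    gg n k - Real.sqrt 5 =
      2 * goldenConj ^ (2 * n * (2 * k + 1)) / (Nat.fib (2 * n * (2 * k + 1)) : ℝ) := by
  have hf := fib_idx_pos k hn
  rw [gg, ← lucas_sub_sqrt5_fib]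
  field_simp

lemma gg_ge_sqrt5 (k : ℕ) (hn : 0 < n) : Real.sqrt 5 ≤ gg n k := by
  have h := gg_sub_sqrt5 k hn
  have hψ : (0:ℝ) ≤ goldenConj ^ (2 * n * (2 * k + 1)) := by
    rw [show 2 * n * (2 * k + 1) = 2 * (n * (2 * k + 1)) by ring, pow_mul]
    positivity
  have hf := fib_idx_pos k hn
  have h2 : (0:ℝ) ≤ 2 * goldenConj ^ (2 * n * (2 * k + 1)) /
      (Nat.fib (2 * n * (2 * k + 1)) : ℝ) := div_nonneg (by linarith) hf.le
  linarith

lemma gg_anti (k : ℕ) (hn : 0 < n) : gg n (k + 1) ≤ gg n k := by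
  have ha := fib_idx_pos k hn
  have hb := fib_idx_pos (k + 1) hn
  have key := lucas_fib_sub (n * (2 * k + 1)) (4 * n)
  have e1 : 2 * (n * (2 * k + 1)) = 2 * n * (2 * k + 1) := by ring
  have e2 : 2 * (n * (2 * k + 1)) + 4 * n = 2 * n * (2 * (k + 1) + 1) := by ring
  rw [e2, e1] at key
  have hfw : (0:ℝ) ≤ (Nat.fib (4 * n) : ℝ) := Nat.cast_nonneg _
  rw [gg, gg, div_le_div_iff₀ hb ha]
  nlinarith

lemma gg_tendsto (hn : 0 < n) : Tendsto (gg n) atTop (nhds (Real.sqrt 5)) := by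
  rw [← tendsto_sub_nhds_zero_iff]
  have hψ : |goldenConj| < 1 :=
    abs_lt.2 ⟨neg_one_lt_goldenConj, goldenConj_neg.trans one_pos⟩
  have hbound : ∀ k, ‖gg n k - Real.sqrt 5‖ ≤ 2 * |goldenConj| ^ k := by
    intro k
    have hf := fib_idx_pos k hn
    have hf1 : (1:ℝ) ≤ (Nat.fib (2 * n * (2 * k + 1)) : ℝ) := by
      exact_mod_cast Nat.one_le_iff_ne_zero.2 (Nat.fib_pos.2 (idx_pos k hn)).ne'
    rw [gg_sub_sqrt5 k hn, Real.norm_eq_abs, abs_div, abs_mul]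
    have h1 : |goldenConj ^ (2 * n * (2 * k + 1))| ≤ |goldenConj| ^ k := by
      rw [abs_pow]
      apply pow_le_pow_of_le_one (abs_nonneg _) hψ.le
      nlinarith
    calc |(2:ℝ)| * |goldenConj ^ (2 * n * (2 * k + 1))| / |(Nat.fib (2 * n * (2 * k + 1)) : ℝ)|
        ≤ |(2:ℝ)| * |goldenConj ^ (2 * n * (2 * k + 1))| / 1 := by
          apply div_le_div_of_nonneg_left _ one_pos _ <;>
            first
              | positivity
              | rw [abs_of_pos hf]; exact hf1
      _ ≤ 2 * |goldenConj| ^ k := by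
          rw [div_one, abs_of_pos (by norm_num : (0:ℝ) < 2)]
          nlinarith [abs_nonneg (goldenConj ^ (2 * n * (2 * k + 1)))]
  have htend : Tendsto (fun k : ℕ => 2 * |goldenConj| ^ k) atTop (nhds 0) := by
    have := tendsto_pow_atTop_nhds_zero_of_lt_one (abs_nonneg goldenConj) hψ
    simpa using this.const_mul 2
  exact squeeze_zero_norm hbound htend

end gglemmas

theorem stmt_15 (q n : ℕ) (hq : 0 < q) (hn : 0 < n) :
    ∏' k : ℕ,
        ((Nat.fib (4 * n * (2 * (k + 1) + q - 1)) : ℝ) + (Nat.fib (4 * n * q) : ℝ)) /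
          ((Nat.fib (4 * n * (2 * (k + 1) + q - 1)) : ℝ) - (Nat.fib (4 * n * q) : ℝ)) =
      (1 / Real.sqrt 5 ^ q) *
        ∏ k ∈ Finset.Icc 1 q,
          (lucas (2 * n * (2 * k - 1)) : ℝ) / (Nat.fib (2 * n * (2 * k - 1)) : ℝ) := by
  set L : ℝ := Real.log (Real.sqrt 5) with hL
  set c : ℕ → ℝ := fun k => Real.log (gg n k) with hc
  set d : ℕ → ℝ := fun k => c k - c (k + 1) with hd
  -- term identity
  have hterm : ∀ k : ℕ,
      ((Nat.fib (4 * n * (2 * (k + 1) + q - 1)) : ℝ) + (Nat.fib (4 * n * q) : ℝ)) /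
          ((Nat.fib (4 * n * (2 * (k + 1) + q - 1)) : ℝ) - (Nat.fib (4 * n * q) : ℝ)) =
        gg n k / gg n (k + q) := by
    intro k
    have hidx : 2 * (k + 1) + q - 1 = 2 * k + q + 1 := by omega
    have hidx2 : 4 * n * (2 * k + q + 1) = 4 * n * q + 4 * (n * (2 * k + 1)) := by ring
    rw [hidx, hidx2, fib_add_fib (4 * n * q) (n * (2 * k + 1)),
      fib_sub_fib (4 * n * q) (n * (2 * k + 1))]
    have e1 : 4 * n * q + 2 * (n * (2 * k + 1)) = 2 * n * (2 * (k + q) + 1) := by ring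
    have e2 : 2 * (n * (2 * k + 1)) = 2 * n * (2 * k + 1) := by ring
    rw [e1, e2, gg, gg]
    have h1 := fib_idx_pos (n := n) k hn
    have h2 := fib_idx_pos (n := n) (k + q) hn
    have h3 := lucas_cast_pos (2 * n * (2 * k + 1))
    have h4 := lucas_cast_pos (2 * n * (2 * (k + q) + 1))
    field_simp
  -- telescoping sums
  have hdsum : ∀ N, ∑ i ∈ Finset.range N, d i = c 0 - c N := fun N =>
    Finset.sum_range_sub' c N
  have hd0 : ∀ k, 0 ≤ d k := by
    intro k
    have := Real.log_le_log (gg_pos (k + 1) hn) (gg_anti k hn)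
    simpa [hd, hc, sub_nonneg] using this
  have hctend : Tendsto c atTop (nhds L) :=
    (gg_tendsto hn).log (ne_of_gt sqrt5_pos)
  have hdHasSum : HasSum d (c 0 - L) := by
    rw [hasSum_iff_tendsto_nat_of_nonneg hd0]
    have : Tendsto (fun N => c 0 - c N) atTop (nhds (c 0 - L)) :=
      tendsto_const_nhds.sub hctend
    refine this.congr fun N => (hdsum N).symm
  -- shifted sums
  have hshift : ∀ j : ℕ, HasSum (fun k => d (k + j)) (c j - L) := by
    intro j
    refine (hasSum_nat_add_iff j).2 ?_
    have e : c j - L + ∑ i ∈ Finset.range j, d i = c 0 - L := by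
      rw [hdsum j]; ring
    rw [e]; exact hdHasSum
  -- sum over j < q
  have hT : HasSum (fun k => ∑ j ∈ Finset.range q, d (k + j))
      (∑ j ∈ Finset.range q, (c j - L)) :=
    hasSum_sum fun j _ => hshift j
  have hTk : ∀ k, ∑ j ∈ Finset.range q, d (k + j) = c k - c (k + q) := by
    intro k
    have := Finset.sum_range_sub' (fun j => c (k + j)) q
    simpa [hd, add_assoc] using this
  have hprod : HasProd (fun k => gg n k / gg n (k + q))
      (Real.exp (∑ j ∈ Finset.range q, (c j - L))) := by
    have h := hT.rexp
    refine h.congr_fun fun k => ?_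
    show gg n k / gg n (k + q) = Real.exp (∑ j ∈ Finset.range q, d (k + j))
    rw [hTk k]
    simp only [hc]
    rw [Real.exp_sub, Real.exp_log (gg_pos k hn), Real.exp_log (gg_pos (k + q) hn)]
  -- evaluate the value
  have hval : Real.exp (∑ j ∈ Finset.range q, (c j - L)) =
      (1 / Real.sqrt 5 ^ q) * ∏ j ∈ Finset.range q, gg n j := by
    rw [Real.exp_sum]
    have : ∀ j ∈ Finset.range q, Real.exp (c j - L) = gg n j / Real.sqrt 5 := by
      intro j _
      rw [Real.exp_sub, hc, hL, Real.exp_log (gg_pos j hn), Real.exp_log sqrt5_pos]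
    rw [Finset.prod_congr rfl this, Finset.prod_div_distrib, Finset.prod_const,
      Finset.card_range]
    ring
  -- RHS product reindex
  have hRHS : ∏ k ∈ Finset.Icc 1 q,
      (lucas (2 * n * (2 * k - 1)) : ℝ) / (Nat.fib (2 * n * (2 * k - 1)) : ℝ) =
      ∏ j ∈ Finset.range q, gg n j := by
    rw [show Finset.Icc 1 q = Finset.map ⟨fun j => j + 1, add_left_injective 1⟩
        (Finset.range q) from ?_]
    · rw [Finset.prod_map]
      refine Finset.prod_congr rfl fun j _ => ?_
      have : 2 * (j + 1) - 1 = 2 * j + 1 := by omega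
      simp only [Function.Embedding.coeFn_mk, this, gg]
    · ext a
      simp only [Finset.mem_Icc, Finset.mem_map, Finset.mem_range,
        Function.Embedding.coeFn_mk]
      constructor
      · rintro ⟨h1, h2⟩; exact ⟨a - 1, by omega, by omega⟩
      · rintro ⟨b, hb, rfl⟩; omega
  rw [tprod_congr hterm, hprod.tprod_eq, hval, hRHS]
end

section
/- The infinite product ∏_{k=1}^{∞} (√5·F_{2k} + 1)/(√5·F_{2k} - 1) converges and equals φ³, where φ = (1+√5)/2. -/
open Real Filter

noncomputable def phi : ℝ := (1 + Real.sqrt 5) / 2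

private lemma phi_eq : phi = goldenRatio := rfl

private lemma phi_sq : phi ^ 2 = phi + 1 := by rw [phi_eq]; exact goldenRatio_sq

private lemma one_lt_phi : 1 < phi := by rw [phi_eq]; exact one_lt_goldenRatio

noncomputable def Ga (n : ℕ) : ℝ := (phi ^ (2*n+1) + 1) / (phi ^ (2*n+1) - 1)

private lemma one_lt_phi_pow (n : ℕ) : 1 < phi ^ (2*n+1) :=
  one_lt_pow₀ one_lt_phi (by omega)

private lemma Ga_pos (n : ℕ) : 0 < Ga n := by
  have := one_lt_phi_pow n
  have h1 : 0 < phi ^ (2*n+1) - 1 := by linarith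
  have h2 : 0 < phi ^ (2*n+1) + 1 := by linarith
  exact div_pos h2 h1

private lemma Ga_anti (n : ℕ) : Ga (n+1) ≤ Ga n := by
  have ha := one_lt_phi_pow n
  have hb := one_lt_phi_pow (n+1)
  have hab : phi ^ (2*n+1) ≤ phi ^ (2*(n+1)+1) :=
    pow_le_pow_right₀ one_lt_phi.le (by omega)
  rw [Ga, Ga, div_le_div_iff₀ (by linarith) (by linarith)]
  nlinarith

private lemma sqrt5_fib (m : ℕ) :
    Real.sqrt 5 * (Nat.fib (2*m) : ℝ) = phi ^ (2*m) - (phi ^ (2*m))⁻¹ := by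
  have h5 : Real.sqrt 5 ≠ 0 := ne_of_gt (Real.sqrt_pos.mpr (by norm_num))
  rw [phi_eq, Real.coe_fib_eq, mul_div_cancel₀ _ h5]
  congr 1
  have hconj : goldenConj = -goldenRatio⁻¹ := by rw [inv_goldenRatio, neg_neg]
  rw [hconj]
  rw [show (-goldenRatio⁻¹) ^ (2*m) = (goldenRatio⁻¹) ^ (2*m) from
    Even.neg_pow ⟨m, by ring⟩ _, inv_pow]

private lemma alg (p x : ℝ) (hp : p^2 = p+1) (hp1 : 1 < p) (hx : p ≤ x) :
    (x*p - (x*p)⁻¹ + 1)/(x*p - (x*p)⁻¹ - 1)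
      = ((x+1)/(x-1)) / ((x*p^2+1)/(x*p^2-1)) := by
  have hx1 : 1 < x := lt_of_lt_of_le hp1 hx
  have hxp : 1 < x*p := by nlinarith
  have hxp0 : (0:ℝ) < x*p := by linarith
  have h3 : 0 < (x*p)^2 - 1 - (x*p) := by nlinarith
  have hden : 0 < x*p - (x*p)⁻¹ - 1 := by
    have heq : x*p - (x*p)⁻¹ - 1 = ((x*p)^2 - 1 - (x*p))/(x*p) := by
      field_simp
    rw [heq]; positivity
  have hA : 0 < x - 1 := by linarith
  have hB : 0 < x*p^2 - 1 := by nlinarith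
  have hBp : 0 < x*p^2 + 1 := by nlinarith
  rw [div_eq_div_iff (ne_of_gt hden) (by positivity)]
  have hx0 : x ≠ 0 := by linarith
  field_simp
  linear_combination (2*x - 2*x^3*p^2) * hp

private lemma fk_eq (k : ℕ) :
    (Real.sqrt 5 * (Nat.fib (2*(k+1)) : ℝ) + 1) /
        (Real.sqrt 5 * (Nat.fib (2*(k+1)) : ℝ) - 1) = Ga k / Ga (k+1) := by
  rw [sqrt5_fib (k+1)]
  have h1 : phi ^ (2*(k+1)) = phi ^ (2*k+1) * phi := by
    rw [← pow_succ]; ring_nf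
  have h2 : phi ^ (2*(k+1)+1) = phi ^ (2*k+1) * phi^2 := by
    rw [← pow_add]; ring_nf
  rw [Ga, Ga, h2, h1]
  exact alg phi (phi ^ (2*k+1)) phi_sq one_lt_phi
    (le_self_pow₀ one_lt_phi.le (by omega))

private lemma tendsto_Ga : Tendsto Ga atTop (nhds 1) := by
  have h1 : Tendsto (fun n : ℕ => phi ^ (2*n+1)) atTop atTop :=
    (tendsto_pow_atTop_atTop_of_one_lt one_lt_phi).comp
      (tendsto_atTop_atTop.mpr fun b => ⟨b, fun n hn => by omega⟩)
  have h2 : Tendsto (fun n : ℕ => phi ^ (2*n+1) - 1) atTop atTop :=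
    tendsto_atTop_add_const_right _ _ h1
  have h3 : Tendsto (fun n : ℕ => 2 / (phi ^ (2*n+1) - 1)) atTop (nhds 0) :=
    Tendsto.div_atTop tendsto_const_nhds h2
  have h4 : Tendsto (fun n : ℕ => 1 + 2 / (phi ^ (2*n+1) - 1)) atTop (nhds (1 + 0)) :=
    tendsto_const_nhds.add h3
  rw [add_zero] at h4
  convert h4 using 2 with n
  have := one_lt_phi_pow n
  have hne : phi ^ (2*n+1) - 1 ≠ 0 := by linarith
  rw [Ga]
  field_simp
  ring

private lemma hasSum_logs :
    HasSum (fun k => Real.log (Ga k) - Real.log (Ga (k+1))) (Real.log (Ga 0)) := by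
  have hnonneg : ∀ k, 0 ≤ Real.log (Ga k) - Real.log (Ga (k+1)) := fun k => by
    have := Real.log_le_log (Ga_pos (k+1)) (Ga_anti k)
    linarith
  rw [hasSum_iff_tendsto_nat_of_nonneg hnonneg]
  have hsum : ∀ n : ℕ, ∑ i ∈ Finset.range n,
      (Real.log (Ga i) - Real.log (Ga (i+1))) = Real.log (Ga 0) - Real.log (Ga n) :=
    fun n => Finset.sum_range_sub' (fun i => Real.log (Ga i)) n
  simp only [hsum]
  have hlog : Tendsto (fun n => Real.log (Ga n)) atTop (nhds 0) := by
    have := ((Real.continuousAt_log (one_ne_zero)).tendsto).comp tendsto_Ga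
    simpa [Function.comp_def] using this
  simpa using tendsto_const_nhds.sub hlog

theorem stmt_17 :
    HasProd (fun k : ℕ =>
      (Real.sqrt 5 * (Nat.fib (2 * (k + 1)) : ℝ) + 1) /
        (Real.sqrt 5 * (Nat.fib (2 * (k + 1)) : ℝ) - 1)) (phi ^ 3) := by
  have h := hasSum_logs.rexp
  have hGa0 : Ga 0 = phi ^ 3 := by
    rw [Ga]
    have := one_lt_phi
    rw [div_eq_iff (by simp; nlinarith)]
    simp only [Nat.mul_zero, Nat.zero_add, pow_one]
    linear_combination (-(phi^2) - 1) * phi_sq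
  have hval : rexp (Real.log (Ga 0)) = phi ^ 3 := by
    rw [Real.exp_log (Ga_pos 0), hGa0]
  rw [hval] at h
  convert h using 2 with k
  rw [Function.comp_apply, Real.exp_sub, Real.exp_log (Ga_pos k),
    Real.exp_log (Ga_pos (k+1))]
  exact fk_eq k
end
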